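/- Let F be a simple graph that is a linear forest, i.e., F is acyclic and every vertex of F has degree at most 2, and let X be a set of vertices. Define the simple graph H on the vertices of X that lie in F, where two distinct vertices u, v ∈ X are adjacent in H if and only if there is a (u,v)-walk in F that is a path whose internal vertices all avoid X (in particular, the edge {u,v} itself qualifies). Then H is acyclic and every vertex of H has degree at most 2; that is, H is a linear forest. -/

import Mathlib

namespace SignatureAux

open SimpleGraph Walk

variable {V : Type*} {F : SimpleGraph V} {X : Set V}

lemma three_distinct (hdeg : ∀ v, (F.neighborSet v).encard ≤ 2) {z a x y : V}
    (ha : F.Adj z a) (hx : F.Adj z x) (hy : F.Adj z y) (hax : a ≠ x) (hay : a ≠ y) : x = y := by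
  by_contra hxy
  have hsub : ({a, x, y} : Set V) ⊆ F.neighborSet z := by
    intro w hw
    rcases hw with rfl | rfl | rfl
    · exact ha
    · exact hx
    · exact hy
  have h3 : ({a, x, y} : Set V).encard = 3 := by
    rw [Set.encard_insert_of_notMem (by simp [hax, hay]), Set.encard_pair hxy]; rfl
  have hle := (Set.encard_le_encard hsub).trans (hdeg z)
  rw [h3] at hle
  norm_num at hle

lemma getVert_cons_one {a b c : V} (h : F.Adj a b) (q : F.Walk b c) :
    (Walk.cons h q).getVert 1 = b := by simp

lemma getVert_one_mem_support (p : F.Walk a b) : p.getVert 1 ∈ p.support := by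
  cases p with
  | nil => simp [Walk.getVert]
  | cons h q =>
    rw [getVert_cons_one]
    simp [Walk.support_cons, q.start_mem_support]

lemma lemC (hdeg : ∀ v, (F.neighborSet v).encard ≤ 2) :
    ∀ {b v : V} (p : F.Walk b v), ∀ {v' : V} (q : F.Walk b v'),
      p.IsPath → q.IsPath → v ∈ X → v' ∈ X → v ≠ b → v' ≠ b →
      (∀ z ∈ p.support, z ∈ X → z = b ∨ z = v) →
      (∀ z ∈ q.support, z ∈ X → z = b ∨ z = v') →
      (¬p.Nil → ¬q.Nil → p.getVert 1 = q.getVert 1) → v = v' := by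
  intro b v p
  induction p with
  | nil =>
    intro v' q _ _ _ _ hvb _ _ _ _
    exact absurd rfl hvb
  | @cons b c v h p ih =>
    intro v' q hp hq hv hv' hvb hv'b hpX hqX hfst
    cases q with
    | nil => exact absurd rfl hv'b
    | @cons _ d _ h' q =>
      have hcd : c = d := by
        have := hfst Walk.not_nil_cons Walk.not_nil_cons
        rwa [getVert_cons_one, getVert_cons_one] at this
      subst hcd
      have hbp : b ∉ p.support := ((Walk.cons_isPath_iff h p).mp hp).2
      have hbq : b ∉ q.support := ((Walk.cons_isPath_iff h' q).mp hq).2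
      have hpP : p.IsPath := ((Walk.cons_isPath_iff h p).mp hp).1
      have hqP : q.IsPath := ((Walk.cons_isPath_iff h' q).mp hq).1
      by_cases hvc : v = c
      · have hc : c = b ∨ c = v' :=
          hqX c (by simp [Walk.support_cons, q.start_mem_support]) (hvc ▸ hv)
        rcases hc with hc | hc
        · exact absurd hc h.ne'
        · exact hvc.trans hc
      by_cases hv'c : v' = c
      · have hc : c = b ∨ c = v :=
          hpX c (by simp [Walk.support_cons, p.start_mem_support]) (hv'c ▸ hv')
        rcases hc with hc | hc
        · exact absurd hc h.ne'
        · exact (hv'c.trans hc).symm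
      refine ih q hpP hqP hv hv' hvc hv'c ?_ ?_ ?_
      · intro z hz hzX
        rcases hpX z (by simp [Walk.support_cons, hz]) hzX with rfl | rfl
        · exact absurd hz hbp
        · exact Or.inr rfl
      · intro z hz hzX
        rcases hqX z (by simp [Walk.support_cons, hz]) hzX with rfl | rfl
        · exact absurd hz hbq
        · exact Or.inr rfl
      · intro hnp hnq
        refine three_distinct hdeg h.symm (p.adj_snd hnp) (q.adj_snd hnq) ?_ ?_
        · intro hb
          exact hbp (hb ▸ getVert_one_mem_support p)
        · intro hb
          exact hbq (hb ▸ getVert_one_mem_support q)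

lemma getVert_one_ne_start {a b : V} {p : F.Walk a b} (hp : p.IsPath) (hn : ¬p.Nil) :
    p.getVert 1 ≠ a := by
  cases p with
  | nil => exact absurd Walk.nil_nil hn
  | cons h q =>
    rw [getVert_cons_one]
    intro hqa
    exact ((Walk.cons_isPath_iff h q).mp hp).2 (hqa ▸ q.start_mem_support)

lemma split_facts [DecidableEq V] {u v z : V} (p : F.Walk u v) (hp : p.IsPath)
    (hz : z ∈ p.support) (hzu : z ≠ u) (hzv : z ≠ v) :
    F.Adj z ((p.takeUntil z hz).reverse.getVert 1) ∧
    F.Adj z ((p.dropUntil z hz).getVert 1) ∧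
    (p.takeUntil z hz).reverse.getVert 1 ≠ (p.dropUntil z hz).getVert 1 ∧
    (p.takeUntil z hz).reverse.getVert 1 ∈ (p.takeUntil z hz).support ∧
    (p.takeUntil z hz).reverse.getVert 1 ∉ (p.dropUntil z hz).support ∧
    (p.dropUntil z hz).getVert 1 ∈ (p.dropUntil z hz).support ∧
    (p.dropUntil z hz).getVert 1 ∉ (p.takeUntil z hz).support ∧
    u ∉ (p.dropUntil z hz).support ∧ v ∉ (p.takeUntil z hz).support := by
  set p1 := p.takeUntil z hz with hp1def
  set p2 := p.dropUntil z hz with hp2def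
  have hp1 : p1.IsPath := hp.takeUntil hz
  have hp2 : p2.IsPath := hp.dropUntil hz
  have hn1 : ¬p1.reverse.Nil := Walk.not_nil_of_ne hzu
  have hn2 : ¬p2.Nil := Walk.not_nil_of_ne hzv
  have disj : List.Disjoint p1.support p2.support.tail := by
    have hnd := hp.support_nodup
    rw [← Walk.take_spec p hz, Walk.support_append] at hnd
    intro a ha hb; exact (List.nodup_append.mp hnd).2.2 a ha a hb rfl
  set c1 := p1.reverse.getVert 1 with hc1def
  set c2 := p2.getVert 1 with hc2def
  have hadj1 : F.Adj z c1 := p1.reverse.adj_snd hn1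
  have hadj2 : F.Adj z c2 := p2.adj_snd hn2
  have hc1mem : c1 ∈ p1.support := by
    have := getVert_one_mem_support p1.reverse
    rwa [Walk.support_reverse, List.mem_reverse] at this
  have hc1z : c1 ≠ z := getVert_one_ne_start hp1.reverse hn1
  have hc2z : c2 ≠ z := getVert_one_ne_start hp2 hn2
  have hc2tail : c2 ∈ p2.support.tail := by
    have h2 := getVert_one_mem_support p2
    rw [Walk.support_eq_cons p2] at h2
    rcases List.mem_cons.mp h2 with h2 | h2
    · exact absurd h2 hc2z
    · exact h2
  have hc1not : c1 ∉ p2.support := by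
    intro hmem
    rw [Walk.support_eq_cons p2] at hmem
    rcases List.mem_cons.mp hmem with hmem | hmem
    · exact hc1z hmem
    · exact disj hc1mem hmem
  have hc2not : c2 ∉ p1.support := fun hmem => disj hmem hc2tail
  have hunot : u ∉ p2.support := by
    intro hmem
    rw [Walk.support_eq_cons p2] at hmem
    rcases List.mem_cons.mp hmem with hmem | hmem
    · exact hzu hmem.symm
    · exact disj p1.start_mem_support hmem
  have hvnot : v ∉ p1.support := by
    intro hmem
    have hv2 : v ∈ p2.support.tail := by
      have := p2.end_mem_support
      rw [Walk.support_eq_cons p2] at this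
      rcases List.mem_cons.mp this with h2 | h2
      · exact absurd h2.symm hzv
      · exact h2
    exact disj hmem hv2
  exact ⟨hadj1, hadj2, fun hcc => hc2not (hcc ▸ hc1mem), hc1mem, hc1not,
    getVert_one_mem_support p2, hc2not, hunot, hvnot⟩

lemma lemE (hdeg : ∀ v, (F.neighborSet v).encard ≤ 2) {u v u' v' : V}
    (hu : u ∈ X) (hv : v ∈ X) (hu' : u' ∈ X) (hv' : v' ∈ X)
    (p : F.Walk u v) (q : F.Walk u' v') (hp : p.IsPath) (hq : q.IsPath)
    (hpX : ∀ z ∈ p.support, z ∈ X → z = u ∨ z = v)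
    (hqX : ∀ z ∈ q.support, z ∈ X → z = u' ∨ z = v')
    {z : V} (hzp : z ∈ p.support) (hzq : z ∈ q.support) (hzX : z ∉ X) :
    s(u, v) = s(u', v') := by
  classical
  have hzu : z ≠ u := fun h => hzX (h ▸ hu)
  have hzv : z ≠ v := fun h => hzX (h ▸ hv)
  have hzu' : z ≠ u' := fun h => hzX (h ▸ hu')
  have hzv' : z ≠ v' := fun h => hzX (h ▸ hv')
  obtain ⟨hc1adj, hc2adj, hc12, hc1m, hc1n, hc2m, hc2n, hun, hvn⟩ :=
    split_facts p hp hzp hzu hzv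
  obtain ⟨hd1adj, hd2adj, hd12, hd1m, hd1n, hd2m, hd2n, hu'n, hv'n⟩ :=
    split_facts q hq hzq hzu' hzv'
  set p1 := p.takeUntil z hzp
  set p2 := p.dropUntil z hzp
  set q1 := q.takeUntil z hzq
  set q2 := q.dropUntil z hzq
  set c1 := p1.reverse.getVert 1
  set c2 := p2.getVert 1
  set d1 := q1.reverse.getVert 1
  set d2 := q2.getVert 1
  have hp1 : p1.IsPath := hp.takeUntil hzp
  have hp2 : p2.IsPath := hp.dropUntil hzp
  have hq1 : q1.IsPath := hq.takeUntil hzq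
  have hq2 : q2.IsPath := hq.dropUntil hzq
  -- X conditions on the pieces
  have hpX2 : ∀ w ∈ p2.support, w ∈ X → w = z ∨ w = v := by
    intro w hw hwX
    rcases hpX w (Walk.support_dropUntil_subset p hzp hw) hwX with rfl | rfl
    · exact absurd hw hun
    · exact Or.inr rfl
  have hpX1 : ∀ w ∈ p1.reverse.support, w ∈ X → w = z ∨ w = u := by
    intro w hw hwX
    rw [Walk.support_reverse, List.mem_reverse] at hw
    rcases hpX w (Walk.support_takeUntil_subset p hzp hw) hwX with rfl | rfl
    · exact Or.inr rfl
    · exact absurd hw hvn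
  have hqX2 : ∀ w ∈ q2.support, w ∈ X → w = z ∨ w = v' := by
    intro w hw hwX
    rcases hqX w (Walk.support_dropUntil_subset q hzq hw) hwX with rfl | rfl
    · exact absurd hw hu'n
    · exact Or.inr rfl
  have hqX1 : ∀ w ∈ q1.reverse.support, w ∈ X → w = z ∨ w = u' := by
    intro w hw hwX
    rw [Walk.support_reverse, List.mem_reverse] at hw
    rcases hqX w (Walk.support_takeUntil_subset q hzq hw) hwX with rfl | rfl
    · exact Or.inr rfl
    · exact absurd hw hv'n
  have hvz : v ≠ z := fun h => hzv h.symm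
  have huz : u ≠ z := fun h => hzu h.symm
  have hv'z : v' ≠ z := fun h => hzv' h.symm
  have hu'z : u' ≠ z := fun h => hzu' h.symm
  -- matching
  have hd1c : d1 = c1 ∨ d1 = c2 := by
    by_contra hcon
    push_neg at hcon
    exact hc12 (three_distinct hdeg hd1adj hc1adj hc2adj hcon.1 hcon.2)
  have hd2c : d2 = c1 ∨ d2 = c2 := by
    by_contra hcon
    push_neg at hcon
    exact hc12 (three_distinct hdeg hd2adj hc1adj hc2adj hcon.1 hcon.2)
  rcases hd1c with hd1c | hd1c
  · -- d1 = c1, hence d2 = c2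
    have hd2c2 : d2 = c2 := by
      rcases hd2c with h | h
      · exact absurd (hd1c.trans h.symm) hd12
      · exact h
    have hvv' : v = v' :=
      lemC hdeg p2 q2 hp2 hq2 hv hv' hvz hv'z hpX2 hqX2
        (fun _ _ => hd2c2.symm)
    have huu' : u = u' :=
      lemC hdeg p1.reverse q1.reverse hp1.reverse hq1.reverse hu hu' huz hu'z hpX1 hqX1
        (fun _ _ => hd1c.symm)
    rw [huu', hvv']
  · -- d1 = c2
    have hd2c1 : d2 = c1 := by
      rcases hd2c with h | h
      · exact h
      · exact absurd (hd1c.trans h.symm) hd12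
    have hvu' : v = u' :=
      lemC hdeg p2 q1.reverse hp2 hq1.reverse hv hu' hvz hu'z hpX2 hqX1
        (fun _ _ => hd1c.symm)
    have huv' : u = v' :=
      lemC hdeg p1.reverse q2 hp1.reverse hq2 hu hv' huz hv'z hpX1 hqX2
        (fun _ _ => hd2c1.symm)
    rw [huv', hvu', Sym2.eq_swap]

variable (F X) in
/-- The signature graph. -/
def HG : SimpleGraph V := SimpleGraph.fromRel (fun u v =>
  u ∈ X ∧ v ∈ X ∧ ∃ p : F.Walk u v, p.IsPath ∧ ∀ w ∈ p.support, w ∈ X → w = u ∨ w = v)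

lemma adj_spec {u v : V} (h : (HG F X).Adj u v) :
    u ≠ v ∧ u ∈ X ∧ v ∈ X ∧
      ∃ p : F.Walk u v, p.IsPath ∧ ∀ w ∈ p.support, w ∈ X → w = u ∨ w = v := by
  rw [HG, SimpleGraph.fromRel_adj] at h
  obtain ⟨hne, hcase⟩ := h
  refine ⟨hne, ?_⟩
  rcases hcase with ⟨hu, hv, p, hp, hX⟩ | ⟨hv, hu, p, hp, hX⟩
  · exact ⟨hu, hv, p, hp, hX⟩
  · refine ⟨hu, hv, p.reverse, hp.reverse, ?_⟩
    intro w hw hwX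
    rw [Walk.support_reverse, List.mem_reverse] at hw
    exact (hX w hw hwX).symm

noncomputable def lp {u v : V} (h : (HG F X).Adj u v) : F.Walk u v :=
  (adj_spec h).2.2.2.choose

lemma lp_path {u v : V} (h : (HG F X).Adj u v) : (lp h).IsPath :=
  (adj_spec h).2.2.2.choose_spec.1

lemma lp_X {u v : V} (h : (HG F X).Adj u v) :
    ∀ w ∈ (lp h).support, w ∈ X → w = u ∨ w = v :=
  (adj_spec h).2.2.2.choose_spec.2

noncomputable def lift : ∀ {a b : V}, (HG F X).Walk a b → F.Walk a b
  | _, _, Walk.nil => Walk.nil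
  | _, _, Walk.cons h p => (lp h).append (lift p)

@[simp] lemma lift_nil {a : V} : lift (Walk.nil : (HG F X).Walk a a) = Walk.nil := rfl

@[simp] lemma lift_cons {a m b : V} (h : (HG F X).Adj a m) (p : (HG F X).Walk m b) :
    lift (Walk.cons h p) = (lp h).append (lift p) := rfl

lemma Hwalk_support {a b : V} (w : (HG F X).Walk a b) :
    ∀ z ∈ w.support, z = a ∨ z ∈ X := by
  induction w with
  | nil => intro z hz; left; simpa using hz
  | cons h w ih =>
    intro z hz
    rw [Walk.support_cons, List.mem_cons] at hz
    rcases hz with rfl | hz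
    · exact Or.inl rfl
    · rcases ih z hz with rfl | hzX
      · exact Or.inr (adj_spec h).2.2.1
      · exact Or.inr hzX

lemma lift_support {a b : V} (w : (HG F X).Walk a b) :
    ∀ z ∈ (lift w).support, z = b ∨
      ∃ (u' v' : V) (h' : (HG F X).Adj u' v'), s(u', v') ∈ w.edges ∧ z ∈ (lp h').support := by
  induction w with
  | nil => intro z hz; left; simpa using hz
  | cons h w ih =>
    intro z hz
    rw [lift_cons, Walk.mem_support_append_iff] at hz
    rcases hz with hz | hz
    · exact Or.inr ⟨_, _, h, by simp, hz⟩
    · rcases ih z hz with rfl | ⟨u', v', h', he, hm⟩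
      · exact Or.inl rfl
      · exact Or.inr ⟨u', v', h', by simp [he], hm⟩

lemma lift_edges {a b : V} (w : (HG F X).Walk a b) :
    ∀ e ∈ (lift w).edges, ∃ (u' v' : V) (h' : (HG F X).Adj u' v'),
      s(u', v') ∈ w.edges ∧ e ∈ (lp h').edges := by
  induction w with
  | nil => intro e he; simp at he
  | cons h w ih =>
    intro e he
    rw [lift_cons, Walk.edges_append, List.mem_append] at he
    rcases he with he | he
    · exact ⟨_, _, h, by simp, he⟩
    · obtain ⟨u', v', h', he', hm⟩ := ih e he
      exact ⟨u', v', h', by simp [he'], hm⟩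

lemma edge_in_lift {a b : V} (c : (HG F X).Walk a b) {x m : V} (hx : x ∈ X) (hm : m ∈ X)
    (hxm : x ≠ m) (he : s(x, m) ∈ (lift c).edges) : s(x, m) ∈ c.edges := by
  obtain ⟨u', v', h', he', hem⟩ := lift_edges c _ he
  have hxs : x ∈ (lp h').support := Walk.fst_mem_support_of_mem_edges _ hem
  have hms : m ∈ (lp h').support := Walk.snd_mem_support_of_mem_edges _ hem
  rcases lp_X h' x hxs hx with rfl | rfl <;> rcases lp_X h' m hms hm with rfl | rfl
  · exact absurd rfl hxm
  · exact he'
  · exact Sym2.eq_swap ▸ he'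
  · exact absurd rfl hxm

lemma lift_isPath (hdeg : ∀ v, (F.neighborSet v).encard ≤ 2) {a b : V}
    (w : (HG F X).Walk a b) (hw : w.IsPath) : (lift w).IsPath := by
  induction w with
  | nil => exact Walk.IsPath.nil
  | @cons u m b h w ih =>
    obtain ⟨hne, huX, hmX, _⟩ := adj_spec h
    have hPp : (lp h).IsPath := lp_path h
    have hW : (lift w).IsPath := ih hw.of_cons
    have hum : u ∉ w.support := ((Walk.cons_isPath_iff h w).mp hw).2
    rw [lift_cons, Walk.isPath_def, Walk.support_append, List.nodup_append]
    refine ⟨hPp.support_nodup, (Walk.support_eq_cons (lift w) ▸ hW.support_nodup).of_cons, ?_⟩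
    intro z hzP y hztail hzy; subst hzy
    have hzW : z ∈ (lift w).support := by
      rw [Walk.support_eq_cons (lift w)]
      exact List.mem_cons_of_mem _ hztail
    have hzm : z ≠ m := by
      rintro rfl
      have hnd := hW.support_nodup
      rw [Walk.support_eq_cons (lift w)] at hnd
      exact (List.nodup_cons.mp hnd).1 hztail
    by_cases hzX : z ∈ X
    · rcases lp_X h z hzP hzX with rfl | rfl
      · rcases lift_support w z hzW with rfl | ⟨u', v', h', he, hm'⟩
        · exact hum w.end_mem_support
        · rcases lp_X h' z hm' hzX with rfl | rfl
          · exact hum (Walk.fst_mem_support_of_mem_edges w he)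
          · exact hum (Walk.snd_mem_support_of_mem_edges w he)
      · exact hzm rfl
    · rcases lift_support w z hzW with rfl | ⟨u', v', h', he, hm'⟩
      · rcases Hwalk_support w z w.end_mem_support with rfl | hbX
        · exact hzm rfl
        · exact hzX hbX
      · obtain ⟨hne', hu'X, hv'X, _⟩ := adj_spec h'
        have hE : s(u, m) = s(u', v') :=
          lemE hdeg huX hmX hu'X hv'X (lp h) (lp h') hPp (lp_path h')
            (lp_X h) (lp_X h') hzP hm' hzX
        exact hum (Walk.fst_mem_support_of_mem_edges w (hE ▸ he))

end SignatureAux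

/-- The signature of a linear forest `F` with respect to a vertex set `X`, viewed as a
simple graph on the vertices of `X`: two distinct vertices `u, v ∈ X` are adjacent iff
they are joined in `F` by a path all of whose internal vertices avoid `X`
(in particular, an edge of `F` between them qualifies). This graph is again a linear
forest: it is acyclic and all its degrees are at most two. -/
theorem signature_isLinearForest {V : Type*} (F : SimpleGraph V)
    (hF : F.IsAcyclic) (hdeg : ∀ v, (F.neighborSet v).encard ≤ 2) (X : Set V) :
    let H : SimpleGraph V := SimpleGraph.fromRel (fun u v =>
      u ∈ X ∧ v ∈ X ∧
        ∃ p : F.Walk u v, p.IsPath ∧ ∀ w ∈ p.support, w ∈ X → w = u ∨ w = v)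
    H.IsAcyclic ∧ ∀ v, (H.neighborSet v).encard ≤ 2 := by
  intro H
  show (SignatureAux.HG F X).IsAcyclic ∧ ∀ v, ((SignatureAux.HG F X).neighborSet v).encard ≤ 2
  open SimpleGraph Walk in
  constructor
  · intro x c hc
    cases c with
    | nil => exact hc.ne_nil rfl
    | @cons _ m _ h c =>
      rw [Walk.cons_isCycle_iff] at hc
      obtain ⟨hcP, hce⟩ := hc
      obtain ⟨hne, hxX, hmX, _⟩ := SignatureAux.adj_spec h
      set P := SignatureAux.lp h with hPdef
      set W := SignatureAux.lift c with hWdef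
      have hPp : P.IsPath := SignatureAux.lp_path h
      have hWp : W.IsPath := SignatureAux.lift_isPath hdeg c hcP
      have hS : ∀ z, z ∈ P.support → z ∈ W.support → z = x ∨ z = m := by
        intro z hzP hzW
        by_cases hzX : z ∈ X
        · exact SignatureAux.lp_X h z hzP hzX
        · rcases SignatureAux.lift_support c z hzW with rfl | ⟨u', v', h', he, hm'⟩
          · exact Or.inl rfl
          · obtain ⟨hne', hu'X, hv'X, _⟩ := SignatureAux.adj_spec h'
            have hE : s(x, m) = s(u', v') :=
              SignatureAux.lemE hdeg hxX hmX hu'X hv'X P (SignatureAux.lp h') hPp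
                (SignatureAux.lp_path h') (SignatureAux.lp_X h) (SignatureAux.lp_X h')
                hzP hm' hzX
            exact absurd (hE ▸ he) hce
      refine hF (SignatureAux.lift (Walk.cons h c)) ?_
      rw [SignatureAux.lift_cons]
      refine ⟨⟨⟨?_⟩, ?_⟩, ?_⟩
      · rw [Walk.edges_append, List.nodup_append]
        refine ⟨hPp.edges_nodup, hWp.edges_nodup, ?_⟩
        intro e heP e' heW hee; subst hee; revert heP heW
        induction e using Sym2.ind with
        | _ a b =>
          intro heP heW
          have hadj : F.Adj a b := F.mem_edgeSet.mp (Walk.edges_subset_edgeSet P heP)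
          have hab : a ≠ b := hadj.ne
          have haP := Walk.fst_mem_support_of_mem_edges P heP
          have hbP := Walk.snd_mem_support_of_mem_edges P heP
          have haW := Walk.fst_mem_support_of_mem_edges W heW
          have hbW := Walk.snd_mem_support_of_mem_edges W heW
          have hexm : s(a, b) = s(x, m) := by
            rcases hS a haP haW with rfl | rfl <;> rcases hS b hbP hbW with rfl | rfl
            · exact absurd rfl hab
            · rfl
            · exact Sym2.eq_swap
            · exact absurd rfl hab
          exact hce (SignatureAux.edge_in_lift c hxX hmX hne (hexm ▸ heW))
      · intro h0
        have hlen := congrArg Walk.length h0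
        rw [Walk.length_append, Walk.length_nil] at hlen
        have hP0 : (SignatureAux.lp h).length = 0 := by omega
        exact hne (Walk.eq_of_length_eq_zero hP0)

      · rw [Walk.support_append, Walk.support_eq_cons P, List.cons_append, List.tail_cons,
          List.nodup_append]
        refine ⟨(Walk.support_eq_cons P ▸ hPp.support_nodup).of_cons,
          (Walk.support_eq_cons W ▸ hWp.support_nodup).of_cons, ?_⟩
        intro z hzPt y hzWt hzy; subst hzy
        have hzP : z ∈ P.support := by
          rw [Walk.support_eq_cons P]; exact List.mem_cons_of_mem _ hzPt
        have hzW : z ∈ W.support := by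
          rw [Walk.support_eq_cons W]; exact List.mem_cons_of_mem _ hzWt
        rcases hS z hzP hzW with rfl | rfl
        · have hnd := hPp.support_nodup
          rw [Walk.support_eq_cons P] at hnd
          exact (List.nodup_cons.mp hnd).1 hzPt
        · have hnd := hWp.support_nodup
          rw [Walk.support_eq_cons W] at hnd
          exact (List.nodup_cons.mp hnd).1 hzWt
  · intro u
    classical
    set f : V → V := fun v =>
      if h : (SignatureAux.HG F X).Adj u v then (SignatureAux.lp h).getVert 1 else u with hfdef
    have hinj : Set.InjOn f ((SignatureAux.HG F X).neighborSet u) := by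
      intro v hv v' hv' hff
      rw [SimpleGraph.mem_neighborSet] at hv hv'
      simp only [hfdef, dif_pos hv, dif_pos hv'] at hff
      obtain ⟨hne, huX, hvX, _⟩ := SignatureAux.adj_spec hv
      obtain ⟨hne', _, hv'X, _⟩ := SignatureAux.adj_spec hv'
      exact SignatureAux.lemC hdeg (SignatureAux.lp hv) (SignatureAux.lp hv')
        (SignatureAux.lp_path hv) (SignatureAux.lp_path hv') hvX hv'X hne.symm hne'.symm
        (SignatureAux.lp_X hv) (SignatureAux.lp_X hv') (fun _ _ => hff)
    have himg : f '' ((SignatureAux.HG F X).neighborSet u) ⊆ F.neighborSet u := by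
      rintro y ⟨v, hv, rfl⟩
      rw [SimpleGraph.mem_neighborSet] at hv
      simp only [hfdef, dif_pos hv]
      exact (SignatureAux.lp hv).adj_snd
        (Walk.not_nil_of_ne (SignatureAux.adj_spec hv).1)
    calc ((SignatureAux.HG F X).neighborSet u).encard
        = (f '' ((SignatureAux.HG F X).neighborSet u)).encard := (hinj.encard_image).symm
      _ ≤ (F.neighborSet u).encard := Set.encard_le_encard himg
      _ ≤ 2 := hdeg u
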